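/- For the symplectic root system C_n with positive roots {e_i ± e_j : i < j} ∪ {2e_j} and ρ = Σ_j (n-j+1)e_j, a weight of the form w·ω_{2k} (w in the Weyl group, ω_{2k} = e_1+...+e_{2k}) satisfies w·ω_{2k} + ρ ∈ W·ρ (conjugate to 0) if and only if its nonzero coordinates consist of exactly k pairs of consecutive coordinates of the form (-1, 1); in that case the permutation σ ∈ S_n with σ(w·ω_{2k} + ρ) = ρ has length k, and the number of such weights is binomial(n-k, k). -/

import Mathlib

open Finset

/-- The action of the hyperoctahedral Weyl group element (σ, ε) (a permutation
together with sign changes) on a vector in ℚⁿ. -/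
def signAct {n : ℕ} (σ : Equiv.Perm (Fin n)) (ε : Fin n → ℚ) (v : Fin n → ℚ) : Fin n → ℚ :=
  fun i => ε i * v (σ⁻¹ i)

/-- ε is a choice of signs. -/
def IsSign {n : ℕ} (ε : Fin n → ℚ) : Prop := ∀ i, ε i = 1 ∨ ε i = -1

/-- μ has all coordinates zero except for exactly k pairwise disjoint pairs of
consecutive coordinates of the form (-1, 1). -/
def PairsShape {n : ℕ} (k : ℕ) (μ : Fin n → ℚ) : Prop :=
  ∃ J : Finset (Fin n), J.card = k ∧ (∀ j ∈ J, (j : ℕ) + 1 < n) ∧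
    (∀ j ∈ J, ∀ j' ∈ J, (j : ℕ) + 1 ≠ (j' : ℕ)) ∧
    (∀ j ∈ J, μ j = -1) ∧
    (∀ i : Fin n, (∃ j ∈ J, (i : ℕ) = (j : ℕ) + 1) → μ i = 1) ∧
    (∀ i : Fin n, i ∉ J → (∀ j ∈ J, (i : ℕ) ≠ (j : ℕ) + 1) → μ i = 0)

def sparseSets (m k : ℕ) : Finset (Finset ℕ) :=
  ((Finset.range m).powersetCard k).filter (fun S => ∀ a ∈ S, a + 1 ∉ S)

lemma sparse_count : ∀ m k : ℕ, (sparseSets m k).card = (m + 1 - k).choose k := by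
  intro m
  induction m using Nat.strong_induction_on with
  | _ m ih =>
    intro k
    match k with
    | 0 =>
      have : sparseSets m 0 = {∅} := by
        ext S
        simp [sparseSets, Finset.mem_powersetCard]
        rintro rfl
        simp
      rw [this]; simp
    | k + 1 =>
      match m with
      | 0 =>
        have : sparseSets 0 (k+1) = ∅ := by
          ext S
          simp [sparseSets, Finset.mem_powersetCard, Finset.subset_empty]
          rintro rfl h
          simp at h
        rw [this]; simp [Nat.choose_eq_zero_of_lt]
      | 1 =>
        have h1 : sparseSets 1 (k+1) = (Finset.range 1).powersetCard (k+1) := by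
          apply Finset.filter_true_of_mem
          intro S hS a ha hca
          rw [Finset.mem_powersetCard] at hS
          have := hS.1 hca
          simp at this
        rw [h1, Finset.card_powersetCard, Finset.card_range]
        match k with
        | 0 => rfl
        | k + 1 => simp [Nat.choose_eq_zero_of_lt]
      | m + 2 =>
        have key := Finset.card_filter_add_card_filter_not
          (s := sparseSets (m+2) (k+1)) (fun S => m+1 ∈ S)
        have h1 : (sparseSets (m+2) (k+1)).filter (fun S => ¬ m+1 ∈ S) = sparseSets (m+1) (k+1) := by
          ext S
          simp only [sparseSets, Finset.mem_filter, Finset.mem_powersetCard]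
          constructor
          · rintro ⟨⟨⟨hsub, hcard⟩, hsp⟩, hnot⟩
            refine ⟨⟨?_, hcard⟩, hsp⟩
            intro a ha
            have := hsub ha
            simp only [Finset.mem_range] at this ⊢
            rcases Nat.lt_succ_iff_lt_or_eq.mp this with h | h
            · exact h
            · exact absurd (h ▸ ha) hnot
          · rintro ⟨⟨hsub, hcard⟩, hsp⟩
            have hnot : m + 1 ∉ S := fun h => by simpa using hsub h
            refine ⟨⟨⟨fun a ha => ?_, hcard⟩, hsp⟩, hnot⟩
            have := hsub ha
            simp only [Finset.mem_range] at this ⊢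
            omega
        have h2 : ((sparseSets (m+2) (k+1)).filter (fun S => m+1 ∈ S)).card = (sparseSets m k).card := by
          refine Finset.card_bij' (fun S _ => S.erase (m+1)) (fun T _ => insert (m+1) T) ?hi ?hj ?left ?right
          case hi =>
            intro S hS
            simp only [sparseSets, Finset.mem_filter, Finset.mem_powersetCard] at hS ⊢
            obtain ⟨⟨⟨hsub, hcard⟩, hsp⟩, hmem⟩ := hS
            have hm : m ∉ S := fun hm => hsp m hm hmem
            refine ⟨⟨fun a ha => ?_, ?_⟩, fun a ha => ?_⟩
            · rw [Finset.mem_erase] at ha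
              have := hsub ha.2
              simp only [Finset.mem_range] at this ⊢
              rcases Nat.lt_succ_iff_lt_or_eq.mp this with h | h
              · rcases Nat.lt_succ_iff_lt_or_eq.mp h with h' | h'
                · exact h'
                · exact absurd (h' ▸ ha.2) hm
              · exact absurd h ha.1
            · rw [Finset.card_erase_of_mem hmem, hcard]
              omega
            · rw [Finset.mem_erase] at ha
              rw [Finset.mem_erase]
              push_neg
              intro _
              exact hsp a ha.2
          case hj =>
            intro T hT
            simp only [sparseSets, Finset.mem_filter, Finset.mem_powersetCard] at hT ⊢
            obtain ⟨⟨hsub, hcard⟩, hsp⟩ := hT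
            have hnot : m + 1 ∉ T := fun h => absurd (Finset.mem_range.mp (hsub h)) (by omega)
            refine ⟨⟨⟨fun a ha => ?_, ?_⟩, fun a ha hca => ?_⟩, by simp⟩
            · rw [Finset.mem_insert] at ha
              rcases ha with rfl | ha
              · simp
              · have := hsub ha; simp only [Finset.mem_range] at this ⊢; omega
            · rw [Finset.card_insert_of_notMem hnot, hcard]
            · rw [Finset.mem_insert] at ha hca
              rcases ha with rfl | ha
              · rcases hca with h | h
                · omega
                · have := hsub h; simp at this; omega
              · rcases hca with h | h
                · have := hsub ha; simp at this; omega
                · exact hsp a ha h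
          case left =>
            intro S hS
            simp only [Finset.mem_filter] at hS
            exact Finset.insert_erase hS.2
          case right =>
            intro T hT
            simp only [sparseSets, Finset.mem_filter, Finset.mem_powersetCard] at hT
            have hnot : m + 1 ∉ T := fun h => absurd (Finset.mem_range.mp (hT.1.1 h)) (by omega)
            exact Finset.erase_insert hnot
        have e1 : (sparseSets (m+1) (k+1)).card = (m + 2 - (k+1)).choose (k+1) := ih (m+1) (by omega) (k+1)
        have e2 : (sparseSets m k).card = (m + 1 - k).choose k := ih m (by omega) k
        rw [h1, h2, e1, e2] at key
        rw [← key]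
        by_cases hkm : k ≤ m + 1
        · have : m + 2 - (k+1) = m + 1 - k := by omega
          rw [this]
          have : m + 3 - (k+1) = (m + 1 - k) + 1 := by omega
          rw [this, Nat.choose_succ_succ' ]
        · have hk1 : m + 2 - (k+1) = 0 := by omega
          have hk2 : m + 1 - k = 0 := by omega
          have hk3 : m + 3 - (k+1) = 0 ∨ m + 3 - (k+1) < k + 1 := by omega
          rw [hk1, hk2]
          rw [Nat.choose_eq_zero_of_lt (show 0 < k + 1 by omega)]
          rw [Nat.choose_eq_zero_of_lt (show m + 2 + 1 - (k + 1) < k + 1 by omega),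
            Nat.choose_eq_zero_of_lt (show 0 < k by omega)]

open Classical in
lemma pairs_props {n k : ℕ} {μ : Fin n → ℚ} (h : PairsShape k μ) :
    (∀ i, μ i = -1 ∨ μ i = 0 ∨ μ i = 1) ∧
    (∀ i : Fin n, μ i = -1 → (i : ℕ) + 1 < n) ∧
    (∀ (i : Fin n) (h2 : (i : ℕ) + 1 < n), μ i = -1 → μ ⟨(i : ℕ) + 1, h2⟩ = 1) ∧
    (∀ i : Fin n, μ i = 1 → ∃ j : Fin n, μ j = -1 ∧ (i : ℕ) = (j : ℕ) + 1) ∧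
    (Finset.univ.filter (fun i => μ i = -1)).card = k ∧
    (Finset.univ.filter (fun i => μ i ≠ 0)).card = 2 * k := by
  obtain ⟨J, hc, hbd, hsp, hm1, hp1, h0⟩ := h
  have hJ : ∀ i : Fin n, i ∈ J ↔ μ i = -1 := by
    intro i
    constructor
    · exact hm1 i
    · intro hv
      by_contra hiJ
      by_cases hs : ∃ j ∈ J, (i : ℕ) = (j : ℕ) + 1
      · rw [hp1 i hs] at hv; norm_num at hv
      · push_neg at hs
        rw [h0 i hiJ hs] at hv; norm_num at hv
  have hvals : ∀ i, μ i = -1 ∨ μ i = 0 ∨ μ i = 1 := by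
    intro i
    by_cases hiJ : i ∈ J
    · exact Or.inl (hm1 i hiJ)
    · by_cases hs : ∃ j ∈ J, (i : ℕ) = (j : ℕ) + 1
      · exact Or.inr (Or.inr (hp1 i hs))
      · push_neg at hs
        exact Or.inr (Or.inl (h0 i hiJ hs))
  have hbd' : ∀ i : Fin n, μ i = -1 → (i : ℕ) + 1 < n := fun i hv => hbd i ((hJ i).mpr hv)
  have hsucc : ∀ (i : Fin n) (h2 : (i : ℕ) + 1 < n), μ i = -1 → μ ⟨(i : ℕ) + 1, h2⟩ = 1 := by
    intro i h2 hv
    exact hp1 _ ⟨i, (hJ i).mpr hv, rfl⟩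
  have hex : ∀ i : Fin n, μ i = 1 → ∃ j : Fin n, μ j = -1 ∧ (i : ℕ) = (j : ℕ) + 1 := by
    intro i hv
    by_cases hs : ∃ j ∈ J, (i : ℕ) = (j : ℕ) + 1
    · obtain ⟨j, hjJ, hij⟩ := hs
      exact ⟨j, hm1 j hjJ, hij⟩
    · push_neg at hs
      have hiJ : i ∉ J := fun hiJ => by rw [hm1 i hiJ] at hv; norm_num at hv
      rw [h0 i hiJ hs] at hv; norm_num at hv
  have hJeq : Finset.univ.filter (fun i => μ i = -1) = J := by
    ext i; simp [hJ i]
  have hcard1 : (Finset.univ.filter (fun i => μ i = -1)).card = k := by rw [hJeq, hc]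
  have hcardp : (Finset.univ.filter (fun i => μ i = 1)).card = k := by
    rw [← hcard1]
    apply Eq.symm
    apply Finset.card_bij (fun (i : Fin n) (hi : i ∈ Finset.univ.filter (fun i => μ i = -1)) =>
      (⟨(i : ℕ) + 1, hbd' i (by simpa using hi)⟩ : Fin n))
    · intro a ha
      simp only [Finset.mem_filter, Finset.mem_univ, true_and] at ha ⊢
      exact hsucc a _ ha
    · intro a ha b hb hab
      have : (a : ℕ) + 1 = (b : ℕ) + 1 := congrArg Fin.val hab
      exact Fin.ext (by omega)
    · intro b hb
      simp only [Finset.mem_filter, Finset.mem_univ, true_and] at hb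
      obtain ⟨j, hj, hbj⟩ := hex b hb
      exact ⟨j, by simp [hj], Fin.ext (by simp [hbj])⟩
  refine ⟨hvals, hbd', hsucc, hex, hcard1, ?_⟩
  have hsplit : Finset.univ.filter (fun i => μ i ≠ 0)
      = Finset.univ.filter (fun i => μ i = -1) ∪ Finset.univ.filter (fun i => μ i = 1) := by
    ext i
    simp only [Finset.mem_filter, Finset.mem_univ, true_and, Finset.mem_union]
    rcases hvals i with hv | hv | hv <;> rw [hv] <;> norm_num
  rw [hsplit, Finset.card_union_of_disjoint, hcard1, hcardp]
  · omega
  · rw [Finset.disjoint_left]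
    intro i hi hi'
    simp only [Finset.mem_filter, Finset.mem_univ, true_and] at hi hi'
    rw [hi] at hi'; norm_num at hi'

open Classical in
lemma pairs_perm {n k : ℕ} {μ : Fin n → ℚ} (h : PairsShape k μ) :
    ∃ τ : Equiv.Perm (Fin n),
      (∀ i : Fin n, μ (τ⁻¹ i) + ((n : ℚ) - ((τ⁻¹ i : Fin n) : ℕ)) = (n : ℚ) - (i : ℕ)) ∧
      (Finset.univ.filter
          (fun p : Fin n × Fin n => p.1 < p.2 ∧ τ p.2 < τ p.1)).card = k := by
  obtain ⟨hvals, hbd, hsucc, hex, hcard1, hcard2⟩ := pairs_props h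
  set g : Fin n → Fin n := fun i =>
    if h1 : μ i = -1 then ⟨(i : ℕ) + 1, hbd i h1⟩
    else if μ i = 1 then ⟨(i : ℕ) - 1, Nat.lt_of_le_of_lt (Nat.sub_le _ _) i.isLt⟩
    else i with hg
  have hval_m1 : ∀ i (h1 : μ i = -1), g i = ⟨(i : ℕ) + 1, hbd i h1⟩ := by
    intro i h1; simp only [hg, dif_pos h1]
  have hval_p1 : ∀ i, μ i = 1 →
      g i = ⟨(i : ℕ) - 1, Nat.lt_of_le_of_lt (Nat.sub_le _ _) i.isLt⟩ := by
    intro i h1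
    have : ¬ μ i = -1 := by rw [h1]; norm_num
    simp only [hg, dif_neg this, if_pos h1]
  have hval_0 : ∀ i, μ i = 0 → g i = i := by
    intro i h1
    have h2 : ¬ μ i = -1 := by rw [h1]; norm_num
    have h3 : ¬ μ i = 1 := by rw [h1]; norm_num
    simp only [hg, dif_neg h2, if_neg h3]
  have hmu_g : ∀ i, (μ i = -1 → μ (g i) = 1 ∧ ((g i : ℕ) = (i : ℕ) + 1))
      ∧ (μ i = 1 → μ (g i) = -1 ∧ ((i : ℕ) = (g i : ℕ) + 1)) := by
    intro i
    constructor
    · intro h1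
      rw [hval_m1 i h1]
      exact ⟨hsucc i (hbd i h1) h1, rfl⟩
    · intro h1
      obtain ⟨j, hj, hij⟩ := hex i h1
      have hgij : g i = j := by
        rw [hval_p1 i h1]; exact Fin.ext (by simp only [Fin.val_mk]; omega)
      rw [hgij]
      exact ⟨hj, hij⟩
  have ginv : Function.Involutive g := by
    intro i
    rcases hvals i with h1 | h1 | h1
    · obtain ⟨h2, h3⟩ := (hmu_g i).1 h1
      rw [(hmu_g (g i)).2 h2 |>.2] at h3
      have := ((hmu_g (g i)).2 h2).1
      exact Fin.ext (by omega)
    · rw [hval_0 i h1, hval_0 i h1]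
    · obtain ⟨h2, h3⟩ := (hmu_g i).2 h1
      have h4 := ((hmu_g (g i)).1 h2).2
      exact Fin.ext (by omega)
  set τ : Equiv.Perm (Fin n) := Function.Involutive.toPerm g ginv with hτ
  have happ : ∀ i, τ i = g i := fun _ => rfl
  refine ⟨τ, ?_, ?_⟩
  · intro i
    have hinv : τ⁻¹ i = g i := rfl
    rw [hinv]
    rcases hvals i with h1 | h1 | h1
    · obtain ⟨h2, h3⟩ := (hmu_g i).1 h1
      rw [h2, h3]
      push_cast
      ring
    · rw [hval_0 i h1, h1]
      ring
    · obtain ⟨h2, h3⟩ := (hmu_g i).2 h1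
      rw [h2]
      have : ((g i : ℕ) : ℚ) = (i : ℕ) - 1 := by
        have : (i : ℕ) = (g i : ℕ) + 1 := h3
        push_cast [this]
        ring
      rw [this]
      ring
  · rw [← hcard1]
    apply Eq.symm
    refine Finset.card_bij' (fun (j : Fin n) (_ : j ∈ Finset.univ.filter (fun i => μ i = -1)) => ((j, g j) : Fin n × Fin n))
      (fun (p : Fin n × Fin n) (_ : p ∈ Finset.univ.filter (fun p : Fin n × Fin n => p.1 < p.2 ∧ τ p.2 < τ p.1)) => p.1)
      ?_ ?_ ?_ ?_
    · intro j hj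
      simp only [Finset.mem_filter, Finset.mem_univ, true_and] at hj ⊢
      obtain ⟨h2, h3⟩ := (hmu_g j).1 hj
      constructor
      · rw [Fin.lt_def]; omega
      · rw [happ, happ, ginv j, Fin.lt_def]; omega
    · intro p hp
      simp only [Finset.mem_filter, Finset.mem_univ, true_and] at hp ⊢
      obtain ⟨hlt, hglt⟩ := hp
      rw [happ, happ, Fin.lt_def] at hglt
      rw [Fin.lt_def] at hlt
      -- bounds: g moves by at most one
      rcases hvals p.1 with h1 | h1 | h1
      · exact h1
      · exfalso
        have e1 : g p.1 = p.1 := hval_0 p.1 h1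
        rcases hvals p.2 with h2 | h2 | h2
        · have := (hmu_g p.2).1 h2; rw [e1] at hglt; omega
        · have := hval_0 p.2 h2; rw [e1, this] at hglt; omega
        · have := (hmu_g p.2).2 h2; rw [e1] at hglt; omega
      · exfalso
        have e1 := (hmu_g p.1).2 h1
        rcases hvals p.2 with h2 | h2 | h2
        · have := (hmu_g p.2).1 h2; omega
        · have := hval_0 p.2 h2; rw [this] at hglt; omega
        · have := (hmu_g p.2).2 h2; omega
    · intro j hj
      rfl
    · intro p hp
      simp only [Finset.mem_filter, Finset.mem_univ, true_and] at hp
      obtain ⟨hlt, hglt⟩ := hp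
      rw [happ, happ, Fin.lt_def] at hglt
      rw [Fin.lt_def] at hlt
      have hgp2 : g p.1 = p.2 := by
        rcases hvals p.1 with h1 | h1 | h1
        · have e1 := (hmu_g p.1).1 h1
          rcases hvals p.2 with h2 | h2 | h2
          · have e2 := (hmu_g p.2).1 h2
            exact Fin.ext (by omega)
          · have e2 := hval_0 p.2 h2; rw [e2] at hglt
            exact Fin.ext (by omega)
          · have e2 := (hmu_g p.2).2 h2
            exact Fin.ext (by omega)
        · exfalso
          have e1 : g p.1 = p.1 := hval_0 p.1 h1
          rcases hvals p.2 with h2 | h2 | h2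
          · have := (hmu_g p.2).1 h2; rw [e1] at hglt; omega
          · have := hval_0 p.2 h2; rw [e1, this] at hglt; omega
          · have := (hmu_g p.2).2 h2; rw [e1] at hglt; omega
        · exfalso
          have e1 := (hmu_g p.1).2 h1
          rcases hvals p.2 with h2 | h2 | h2
          · have := (hmu_g p.2).1 h2; omega
          · have := hval_0 p.2 h2; rw [this] at hglt; omega
          · have := (hmu_g p.2).2 h2; omega
      exact Prod.ext rfl hgp2

open Classical in
lemma conj_pairs {n k : ℕ} {μ : Fin n → ℚ}
    (hvals : ∀ i, μ i = -1 ∨ μ i = 0 ∨ μ i = 1)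
    (hsupp : (Finset.univ.filter (fun i => μ i ≠ 0)).card = 2 * k)
    (σ : Equiv.Perm (Fin n)) (ε : Fin n → ℚ) (hε : IsSign ε)
    (hconj : signAct σ ε (μ + (fun j : Fin n => (n : ℚ) - (j : ℕ))) = (fun j : Fin n => (n : ℚ) - (j : ℕ))) :
    PairsShape k μ := by
  have hρpos : ∀ j : Fin n, (1 : ℚ) ≤ (n : ℚ) - (j : ℕ) := by
    intro j
    have h1 : (j : ℕ) + 1 ≤ n := j.isLt
    have h2 : ((j : ℕ) : ℚ) + 1 ≤ (n : ℚ) := by exact_mod_cast h1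
    linarith
  have hpos : ∀ j : Fin n, (0 : ℚ) ≤ μ j + ((n : ℚ) - (j : ℕ)) := by
    intro j
    have h1 : (-1 : ℚ) ≤ μ j := by rcases hvals j with h | h | h <;> rw [h] <;> norm_num
    have := hρpos j
    linarith
  have hstep : ∀ i : Fin n, μ (σ⁻¹ i) + ((n : ℚ) - ((σ⁻¹ i : Fin n) : ℕ)) = (n : ℚ) - (i : ℕ) := by
    intro i
    have h1 := congrFun hconj i
    simp only [signAct, Pi.add_apply] at h1
    rcases hε i with h | h
    · rw [h, one_mul] at h1; exact h1
    · exfalso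
      rw [h] at h1
      have h2 := hpos (σ⁻¹ i)
      have h3 := hρpos i
      nlinarith
  have hkey : ∀ j : Fin n, μ j = ((j : ℕ) : ℚ) - ((σ j : Fin n) : ℕ) := by
    intro j
    have := hstep (σ j)
    rw [show σ⁻¹ (σ j) = j from σ.symm_apply_apply j] at this
    linarith
  have hm1 : ∀ j : Fin n, μ j = -1 → ((σ j : Fin n) : ℕ) = (j : ℕ) + 1 := by
    intro j h
    have := hkey j
    rw [h] at this
    have : ((σ j : Fin n) : ℕ) = ((j : ℕ) : ℚ) + 1 := by push_cast; linarith
    exact_mod_cast this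
  have hp1 : ∀ j : Fin n, μ j = 1 → (j : ℕ) = ((σ j : Fin n) : ℕ) + 1 := by
    intro j h
    have := hkey j
    rw [h] at this
    have : ((j : ℕ) : ℚ) = ((σ j : Fin n) : ℕ) + 1 := by push_cast; linarith
    exact_mod_cast this
  have h00 : ∀ j : Fin n, μ j = 0 → σ j = j := by
    intro j h
    have := hkey j
    rw [h] at this
    have h2 : (((σ j : Fin n) : ℕ) : ℚ) = ((j : ℕ) : ℚ) := by push_cast; linarith
    exact Fin.ext (by exact_mod_cast h2)
  -- Claim 1: left neighbor of a +1 is a -1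
  have claim1 : ∀ m : ℕ, ∀ j : Fin n, (j : ℕ) = m → μ j = 1 →
      ∀ j' : Fin n, (j' : ℕ) + 1 = (j : ℕ) → μ j' = -1 := by
    intro m
    induction m using Nat.strong_induction_on with
    | _ m ih =>
      intro j hjm hj j' hj'
      have e1 := hp1 j hj
      have hj'σ : j' = σ j := Fin.ext (by omega)
      rcases hvals j' with h | h | h
      · exact h
      · exfalso
        have := h00 j' h
        have : σ j' = σ j := by rw [this, hj'σ]
        have : j' = j := σ.injective this
        have := congrArg Fin.val this
        omega
      · exfalso
        have e2 := hp1 j' h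
        have hmm : μ (σ j') = -1 := by
          apply ih (j' : ℕ) (by omega) j' rfl h (σ j') (by omega)
        have e3 := hm1 (σ j') hmm
        have : σ (σ j') = σ j := Fin.ext (by omega)
        have : σ j' = j := σ.injective this
        have := congrArg Fin.val this
        omega
  -- Claim 2: right neighbor of a -1 is a +1
  have claim2 : ∀ m : ℕ, ∀ j : Fin n, n - (j : ℕ) = m → μ j = -1 →
      ∃ h2 : (j : ℕ) + 1 < n, μ ⟨(j : ℕ) + 1, h2⟩ = 1 := by
    intro m
    induction m using Nat.strong_induction_on with
    | _ m ih =>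
      intro j hjm hj
      have e1 := hm1 j hj
      have hlt : (j : ℕ) + 1 < n := by
        have := (σ j).isLt
        omega
      refine ⟨hlt, ?_⟩
      have hσj : σ j = ⟨(j : ℕ) + 1, hlt⟩ := Fin.ext (by simpa using e1)
      rcases hvals ⟨(j : ℕ) + 1, hlt⟩ with h | h | h
      · exfalso
        obtain ⟨h2', hmm⟩ := ih (n - ((j : ℕ) + 1)) (by omega) ⟨(j : ℕ) + 1, hlt⟩ (by simp) h
        have e2 := hp1 _ hmm
        have e3 := hm1 _ h
        simp only [Fin.val_mk] at e2 e3
        -- σ ⟨j+2⟩ has value j+1 = value of σ j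
        have : σ ⟨(j : ℕ) + 1 + 1, h2'⟩ = σ j := Fin.ext (by simp only [Fin.val_mk] at *; omega)
        have := σ.injective this
        have := congrArg Fin.val this
        simp only [Fin.val_mk] at this
        omega
      · exfalso
        have := h00 _ h
        have : σ ⟨(j : ℕ) + 1, hlt⟩ = σ j := by rw [this, hσj]
        have := congrArg Fin.val (σ.injective this)
        simp only [Fin.val_mk] at this
        omega
      · exact h
  -- assemble PairsShape
  refine ⟨Finset.univ.filter (fun i => μ i = -1), ?_, ?_, ?_, ?_, ?_, ?_⟩
  · -- card = k
    have hcardp : (Finset.univ.filter (fun i => μ i = -1)).card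
        = (Finset.univ.filter (fun i => μ i = 1)).card := by
      apply Finset.card_bij (fun (i : Fin n) (hi : i ∈ Finset.univ.filter (fun i => μ i = -1)) =>
        (⟨(i : ℕ) + 1, (claim2 (n - i) i rfl (by simpa using hi)).1⟩ : Fin n))
      · intro a ha
        simp only [Finset.mem_filter, Finset.mem_univ, true_and] at ha ⊢
        exact (claim2 (n - a) a rfl ha).2
      · intro a ha b hb hab
        have := congrArg Fin.val hab
        simp only [Fin.val_mk] at this
        exact Fin.ext (by omega)
      · intro b hb
        simp only [Finset.mem_filter, Finset.mem_univ, true_and] at hb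
        have e1 := hp1 b hb
        have hmm : μ (σ b) = -1 := claim1 (b : ℕ) b rfl hb (σ b) (by omega)
        refine ⟨σ b, by simp [hmm], Fin.ext ?_⟩
        simp only [Fin.val_mk]
        omega
    have hsplit : Finset.univ.filter (fun i => μ i ≠ 0)
        = Finset.univ.filter (fun i => μ i = -1) ∪ Finset.univ.filter (fun i => μ i = 1) := by
      ext i
      simp only [Finset.mem_filter, Finset.mem_univ, true_and, Finset.mem_union]
      rcases hvals i with hv | hv | hv <;> rw [hv] <;> norm_num
    have hdisj : Disjoint (Finset.univ.filter (fun i => μ i = -1))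
        (Finset.univ.filter (fun i => μ i = 1)) := by
      rw [Finset.disjoint_left]
      intro i hi hi'
      simp only [Finset.mem_filter, Finset.mem_univ, true_and] at hi hi'
      rw [hi] at hi'; norm_num at hi'
    rw [hsplit, Finset.card_union_of_disjoint hdisj, ← hcardp] at hsupp
    omega
  · intro j hj
    simp only [Finset.mem_filter, Finset.mem_univ, true_and] at hj
    exact (claim2 (n - j) j rfl hj).1
  · intro j hj j' hj' heq
    simp only [Finset.mem_filter, Finset.mem_univ, true_and] at hj hj'
    obtain ⟨h2, hval⟩ := claim2 (n - j) j rfl hj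
    have : (⟨(j : ℕ) + 1, h2⟩ : Fin n) = j' := Fin.ext heq
    rw [this, hj'] at hval
    norm_num at hval
  · intro j hj
    simpa using hj
  · rintro i ⟨j, hj, hij⟩
    simp only [Finset.mem_filter, Finset.mem_univ, true_and] at hj
    obtain ⟨h2, hval⟩ := claim2 (n - j) j rfl hj
    have : (⟨(j : ℕ) + 1, h2⟩ : Fin n) = i := Fin.ext hij.symm
    rwa [this] at hval
  · intro i hi hns
    simp only [Finset.mem_filter, Finset.mem_univ, true_and] at hi
    rcases hvals i with h | h | h
    · exact absurd h hi
    · exact h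
    · exfalso
      have e1 := hp1 i h
      have hmm : μ (σ i) = -1 := claim1 (i : ℕ) i rfl h (σ i) (by omega)
      exact hns (σ i) (by simp [hmm]) (by omega)

lemma card_lt_filter {n m : ℕ} (h : m ≤ n) :
    (Finset.univ.filter (fun i : Fin n => (i : ℕ) < m)).card = m := by
  have : Finset.univ.filter (fun i : Fin n => (i : ℕ) < m)
      = (Finset.range m).attachFin (fun x hx => lt_of_lt_of_le (Finset.mem_range.mp hx) h) := by
    ext i
    simp [Finset.mem_attachFin]
  rw [this, Finset.card_attachFin, Finset.card_range]

lemma orbit_props {n k : ℕ} (hk : 2 * k ≤ n) {μ : Fin n → ℚ}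
    (σ : Equiv.Perm (Fin n)) (ε : Fin n → ℚ) (hε : IsSign ε)
    (hμ : μ = signAct σ ε (fun i : Fin n => if (i : ℕ) < 2 * k then 1 else 0)) :
    (∀ i, μ i = -1 ∨ μ i = 0 ∨ μ i = 1) ∧
    (Finset.univ.filter (fun i => μ i ≠ 0)).card = 2 * k := by
  constructor
  · intro i
    rw [hμ]
    simp only [signAct]
    rcases hε i with h | h <;> rw [h] <;> by_cases h2 : ((σ⁻¹ i : Fin n) : ℕ) < 2 * k <;>
      (simp only [Equiv.Perm.inv_def] at h2; simp [h2])
  · have hset : Finset.univ.filter (fun i => μ i ≠ 0)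
        = Finset.univ.filter (fun i : Fin n => ((σ⁻¹ i : Fin n) : ℕ) < 2 * k) := by
      ext i
      simp only [Finset.mem_filter, Finset.mem_univ, true_and, hμ, signAct]
      rcases hε i with h | h <;> rw [h] <;> by_cases h2 : ((σ⁻¹ i : Fin n) : ℕ) < 2 * k <;>
        simp [h2]
    have hbij : (Finset.univ.filter (fun i : Fin n => ((σ⁻¹ i : Fin n) : ℕ) < 2 * k)).card
        = (Finset.univ.filter (fun i : Fin n => (i : ℕ) < 2 * k)).card := by
      apply Finset.card_bij (fun (i : Fin n) (_ : i ∈ Finset.univ.filter (fun i : Fin n => ((σ⁻¹ i : Fin n) : ℕ) < 2 * k)) => σ⁻¹ i)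
      · intro a ha
        simp only [Finset.mem_filter, Finset.mem_univ, true_and] at ha ⊢
        exact ha
      · intro a _ b _ hab
        exact (Equiv.injective σ⁻¹) hab
      · intro b hb
        simp only [Finset.mem_filter, Finset.mem_univ, true_and] at hb ⊢
        exact ⟨σ b, by simp [hb], by simp⟩
    rw [hset, hbij, card_lt_filter hk]
  -- done

open Classical in
lemma orbit_of {n k : ℕ} (hk : 2 * k ≤ n) {μ : Fin n → ℚ}
    (hvals : ∀ i, μ i = -1 ∨ μ i = 0 ∨ μ i = 1)
    (hsupp : (Finset.univ.filter (fun i => μ i ≠ 0)).card = 2 * k) :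
    ∃ σ ε, IsSign ε ∧ μ = signAct σ ε (fun i : Fin n => if (i : ℕ) < 2 * k then 1 else 0) := by
  set p : Fin n → Prop := fun i => μ i ≠ 0 with hp
  set q : Fin n → Prop := fun i => (i : ℕ) < 2 * k with hq
  have hcp : Fintype.card {x // p x} = 2 * k := by
    rw [Fintype.card_subtype]; exact hsupp
  have hcq : Fintype.card {x // q x} = 2 * k := by
    rw [Fintype.card_subtype]; exact card_lt_filter hk
  have e : {x // q x} ≃ {x // p x} := Fintype.equivOfCardEq (by rw [hcp, hcq])
  have e' : {x // ¬ q x} ≃ {x // ¬ p x} := Fintype.equivOfCardEq (by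
    rw [Fintype.card_subtype_compl, Fintype.card_subtype_compl, hcp, hcq])
  set σ : Equiv.Perm (Fin n) :=
    ((Equiv.sumCompl q).symm.trans ((Equiv.sumCongr e e').trans (Equiv.sumCompl p))) with hσ
  have hσq : ∀ x : Fin n, q x → p (σ x) := by
    intro x hx
    simp only [hσ, Equiv.trans_apply, Equiv.sumCompl_symm_apply_of_pos hx,
      Equiv.sumCongr_apply, Sum.map_inl, Equiv.sumCompl_apply_inl]
    exact (e ⟨x, hx⟩).2
  have hσq' : ∀ x : Fin n, ¬ q x → ¬ p (σ x) := by
    intro x hx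
    simp only [hσ, Equiv.trans_apply, Equiv.sumCompl_symm_apply_of_neg hx,
      Equiv.sumCongr_apply, Sum.map_inr, Equiv.sumCompl_apply_inr]
    exact (e' ⟨x, hx⟩).2
  have hiff : ∀ i : Fin n, p i ↔ q (σ⁻¹ i) := by
    intro i
    constructor
    · intro hpi
      by_contra hq
      exact hσq' _ hq (by simpa using hpi)
    · intro hq
      simpa using hσq _ hq
  refine ⟨σ, fun i => if μ i = 0 then 1 else μ i, ?_, ?_⟩
  · intro i
    rcases hvals i with h | h | h <;> simp [h]
  · funext i
    simp only [signAct]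
    by_cases h : μ i = 0
    · have h1 : ¬ p i := by simp [hp, h]
      have h2 : ¬ ((σ⁻¹ i : Fin n) : ℕ) < 2 * k := fun hc => h1 ((hiff i).mpr hc)
      rw [if_pos h, if_neg h2, mul_zero, h]
    · have h2 : ((σ⁻¹ i : Fin n) : ℕ) < 2 * k := (hiff i).mp h
      rw [if_neg h, if_pos h2, mul_one]

open Classical in
noncomputable def muOf {n : ℕ} (J : Finset (Fin n)) : Fin n → ℚ :=
  fun i => if i ∈ J then -1 else if ∃ j ∈ J, (i : ℕ) = (j : ℕ) + 1 then 1 else 0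

def validJ (n k : ℕ) : Finset (Finset (Fin n)) :=
  Finset.univ.filter (fun J => J.card = k ∧ (∀ j ∈ J, (j : ℕ) + 1 < n)
    ∧ (∀ j ∈ J, ∀ j' ∈ J, (j : ℕ) + 1 ≠ (j' : ℕ)))

open Classical in
lemma muOf_mem_iff {n : ℕ} (J : Finset (Fin n)) (i : Fin n) : i ∈ J ↔ muOf J i = -1 := by
  constructor
  · intro h; simp [muOf, h]
  · intro h
    by_contra hiJ
    by_cases hs : ∃ j ∈ J, (i : ℕ) = (j : ℕ) + 1 <;> simp [muOf, hiJ, hs] at h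
    · norm_num at h

lemma muOf_injective {n : ℕ} : Function.Injective (muOf (n := n)) := by
  intro J J' h
  ext i
  rw [muOf_mem_iff, muOf_mem_iff, h]

open Classical in
lemma pairsShape_iff {n k : ℕ} (μ : Fin n → ℚ) :
    PairsShape k μ ↔ ∃ J ∈ validJ n k, μ = muOf J := by
  constructor
  · rintro ⟨J, hc, hbd, hsp, hm1, hp1, h0⟩
    refine ⟨J, by simp only [validJ, Finset.mem_filter, Finset.mem_univ, true_and]; exact ⟨hc, hbd, hsp⟩, ?_⟩
    funext i
    by_cases hiJ : i ∈ J
    · rw [hm1 i hiJ]; simp [muOf, hiJ]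
    · by_cases hs : ∃ j ∈ J, (i : ℕ) = (j : ℕ) + 1
      · rw [hp1 i hs]; simp [muOf, hiJ, hs]
      · push_neg at hs
        rw [h0 i hiJ hs]
        simp only [muOf, if_neg hiJ]
        rw [if_neg (by push_neg; exact hs)]
  · rintro ⟨J, hJ, rfl⟩
    simp only [validJ, Finset.mem_filter, Finset.mem_univ, true_and] at hJ
    obtain ⟨hc, hbd, hsp⟩ := hJ
    refine ⟨J, hc, hbd, hsp, ?_, ?_, ?_⟩
    · intro j hj; simp [muOf, hj]
    · intro i hs
      have hiJ : i ∉ J := by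
        intro hiJ
        obtain ⟨j, hjJ, hij⟩ := hs
        exact hsp j hjJ i hiJ hij.symm
      simp [muOf, hiJ, hs]
    · intro i hiJ hns
      simp only [muOf, if_neg hiJ]
      rw [if_neg]
      push_neg
      exact hns

lemma validJ_card {n k : ℕ} (hn : 1 ≤ n) : (validJ n k).card = (n - k).choose k := by
  have key : (validJ n k).card = (sparseSets (n - 1) k).card := by
    refine Finset.card_bij' (fun (J : Finset (Fin n)) (_ : J ∈ validJ n k) => J.image Fin.val)
      (fun (S : Finset ℕ) (hS : S ∈ sparseSets (n-1) k) =>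
        S.attachFin (fun m hm => by
          have : S ⊆ Finset.range (n-1) := by
            have := (Finset.mem_filter.mp hS).1
            exact (Finset.mem_powersetCard.mp this).1
          have := Finset.mem_range.mp (this hm)
          omega)) ?_ ?_ ?_ ?_
    · intro J hJ
      simp only [validJ, Finset.mem_filter, Finset.mem_univ, true_and] at hJ
      obtain ⟨hc, hbd, hsp⟩ := hJ
      simp only [sparseSets, Finset.mem_filter, Finset.mem_powersetCard]
      refine ⟨⟨?_, ?_⟩, ?_⟩
      · intro a ha
        simp only [Finset.mem_image] at ha
        obtain ⟨j, hj, rfl⟩ := ha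
        rw [Finset.mem_range]
        have := hbd j hj
        omega
      · rw [Finset.card_image_of_injective _ Fin.val_injective, hc]
      · intro a ha hca
        simp only [Finset.mem_image] at ha hca
        obtain ⟨j, hj, rfl⟩ := ha
        obtain ⟨j', hj', hj'e⟩ := hca
        exact hsp j hj j' hj' hj'e.symm
    · intro S hS
      simp only [sparseSets, Finset.mem_filter, Finset.mem_powersetCard] at hS
      obtain ⟨⟨hsub, hcard⟩, hsp⟩ := hS
      simp only [validJ, Finset.mem_filter, Finset.mem_univ, true_and]
      refine ⟨?_, ?_, ?_⟩
      · rw [Finset.card_attachFin, hcard]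
      · intro j hj
        rw [Finset.mem_attachFin] at hj
        have := Finset.mem_range.mp (hsub hj)
        omega
      · intro j hj j' hj' he
        rw [Finset.mem_attachFin] at hj hj'
        exact hsp (j : ℕ) hj (he ▸ hj')
    · intro J hJ
      ext j
      rw [Finset.mem_attachFin, Finset.mem_image]
      constructor
      · rintro ⟨j', hj', he⟩
        rwa [← Fin.val_injective he]
      · intro hj
        exact ⟨j, hj, rfl⟩
    · intro S hS
      ext a
      rw [Finset.mem_image]
      constructor
      · rintro ⟨j, hj, rfl⟩
        rwa [Finset.mem_attachFin] at hj
      · intro ha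
        have hsub : S ⊆ Finset.range (n-1) :=
          (Finset.mem_powersetCard.mp (Finset.mem_filter.mp hS).1).1
        have hlt : a < n := by
          have := Finset.mem_range.mp (hsub ha)
          omega
        exact ⟨⟨a, hlt⟩, by rwa [Finset.mem_attachFin], rfl⟩
  rw [key, sparse_count]
  congr 1
  omega

/-- For the root system Cₙ with ρ = (n, n-1, …, 1) and ω_{2k} = e₁ + ⋯ + e_{2k}:
a weight μ = w·ω_{2k} is conjugate to 0 (i.e. μ + ρ ∈ W·ρ) iff its nonzero
coordinates consist of exactly k pairs of consecutive coordinates (-1, 1);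
in that case there is a permutation σ ∈ Sₙ with σ(μ+ρ) = ρ of length
(number of inversions) k; and the number of such weights is binomial(n-k, k). -/
theorem stmt19 (n k : ℕ) (hk : 2 * k ≤ n) (hn : 1 ≤ n) :
    (let ρ : Fin n → ℚ := fun j => (n : ℚ) - (j : ℕ)
     let ω : Fin n → ℚ := fun i => if (i : ℕ) < 2 * k then 1 else 0
     (∀ μ : Fin n → ℚ, (∃ σ ε, IsSign ε ∧ μ = signAct σ ε ω) →
        ((∃ σ ε, IsSign ε ∧ signAct σ ε (μ + ρ) = ρ) ↔ PairsShape k μ)) ∧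
     (∀ μ : Fin n → ℚ, (∃ σ ε, IsSign ε ∧ μ = signAct σ ε ω) →
        (∃ σ ε, IsSign ε ∧ signAct σ ε (μ + ρ) = ρ) →
        ∃ τ : Equiv.Perm (Fin n), (fun i => (μ + ρ) (τ⁻¹ i)) = ρ ∧
          (Finset.univ.filter
              (fun p : Fin n × Fin n => p.1 < p.2 ∧ τ p.2 < τ p.1)).card = k) ∧
     Set.ncard {μ : Fin n → ℚ |
        (∃ σ ε, IsSign ε ∧ μ = signAct σ ε ω) ∧
        (∃ σ ε, IsSign ε ∧ signAct σ ε (μ + ρ) = ρ)} = Nat.choose (n - k) k) := by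
  set ρ : Fin n → ℚ := fun j => (n : ℚ) - (j : ℕ) with hρ
  set ω : Fin n → ℚ := fun i => if (i : ℕ) < 2 * k then 1 else 0 with hω
  have partA : ∀ μ : Fin n → ℚ, (∃ σ ε, IsSign ε ∧ μ = signAct σ ε ω) →
      ((∃ σ ε, IsSign ε ∧ signAct σ ε (μ + ρ) = ρ) ↔ PairsShape k μ) := by
    rintro μ ⟨σ0, ε0, hε0, hμ⟩
    constructor
    · rintro ⟨σ, ε, hε, hc⟩
      obtain ⟨hvals, hsupp⟩ := orbit_props hk σ0 ε0 hε0 hμ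
      exact conj_pairs hvals hsupp σ ε hε hc
    · intro hp
      obtain ⟨τ, hτ, _⟩ := pairs_perm hp
      refine ⟨τ, fun _ => 1, fun i => Or.inl rfl, ?_⟩
      funext i
      simp only [signAct, one_mul, Pi.add_apply]
      exact hτ i
  refine ⟨partA, ?_, ?_⟩
  · intro μ horb hconj
    have hp : PairsShape k μ := (partA μ horb).mp hconj
    obtain ⟨τ, hτ, hcount⟩ := pairs_perm hp
    refine ⟨τ, ?_, hcount⟩
    funext i
    simp only [Pi.add_apply]
    exact hτ i
  · have hsetE : {μ : Fin n → ℚ |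
        (∃ σ ε, IsSign ε ∧ μ = signAct σ ε ω) ∧
        (∃ σ ε, IsSign ε ∧ signAct σ ε (μ + ρ) = ρ)}
        = ↑((validJ n k).image muOf) := by
      ext μ
      simp only [Set.mem_setOf_eq, Finset.coe_image, Set.mem_image, Finset.mem_coe]
      constructor
      · rintro ⟨horb, hconj⟩
        have hp : PairsShape k μ := (partA μ horb).mp hconj
        obtain ⟨J, hJ, rfl⟩ := (pairsShape_iff μ).mp hp
        exact ⟨J, hJ, rfl⟩
      · rintro ⟨J, hJ, rfl⟩
        have hp : PairsShape k (muOf J) := (pairsShape_iff _).mpr ⟨J, hJ, rfl⟩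
        obtain ⟨hvals, hbd, hsucc, hex, hc1, hc2⟩ := pairs_props hp
        have horb := orbit_of hk hvals hc2
        exact ⟨horb, (partA _ horb).mpr hp⟩
    rw [hsetE, Set.ncard_coe_finset, Finset.card_image_of_injective _ muOf_injective,
      validJ_card hn]
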